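/- For a prime p and a prime l ≠ p, the formula ∃ y, 1 + p·x^l = y^l defines ℤ_p in ℚ_p: for x ∈ ℚ_p, there exists y ∈ ℚ_p with 1 + p·x^l = y^l if and only if x ∈ ℤ_p. -/

import Mathlib

open Padic

private lemma padic_val_pow {p : ℕ} [Fact p.Prime] (x : ℚ_[p]) (hx : x ≠ 0) :
    ∀ n : ℕ, (x ^ n).valuation = n * x.valuation := by
  intro n
  induction n with
  | zero => simp [Padic.valuation_one]
  | succ n ih =>
    rw [pow_succ, Padic.valuation_mul (pow_ne_zero n hx) hx, ih]
    push_cast; ring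

private lemma padic_val_neg {p : ℕ} [Fact p.Prime] (x : ℚ_[p]) (hx : x ≠ 0) :
    (-x).valuation = x.valuation := by
  have : (-x) = (-1) * x := by ring
  rw [this, Padic.valuation_mul (by norm_num) hx]
  have h1 : ((-1 : ℤ) : ℚ_[p]) = -1 := by push_cast; ring
  rw [← h1, Padic.valuation_intCast]
  simp [padicValInt]

/-- if v(a) < v(b), a ≠ 0, b ≠ 0 then v(a+b) = v(a) -/
private lemma padic_val_add_eq {p : ℕ} [Fact p.Prime] (a b : ℚ_[p]) (ha : a ≠ 0) (hb : b ≠ 0)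
    (h : a.valuation < b.valuation) : (a + b).valuation = a.valuation := by
  have hab : a + b ≠ 0 := by
    intro h0
    have hb' : b = -a := eq_neg_of_add_eq_zero_right h0
    rw [hb', padic_val_neg a ha] at h
    exact lt_irrefl _ h
  have h1 : min a.valuation b.valuation ≤ (a + b).valuation :=
    Padic.le_valuation_add hab
  rw [min_eq_left h.le] at h1
  have h2 : a = (a + b) + (-b) := by ring
  have h3 : min (a + b).valuation (-b).valuation ≤ a.valuation := by
    have h5 := Padic.le_valuation_add (x := a + b) (y := -b) (by rw [← h2]; exact ha)
    rwa [← h2] at h5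
  rw [padic_val_neg b hb] at h3
  rcases min_le_iff.mp h3 with h4 | h4
  · exact le_antisymm h4 h1
  · linarith

theorem padic_int_diophantine (p l : ℕ) [Fact p.Prime] (hl : l.Prime) (hlp : l ≠ p)
    (x : ℚ_[p]) :
    (∃ y : ℚ_[p], 1 + (p : ℚ_[p]) * x ^ l = y ^ l) ↔ ‖x‖ ≤ 1 := by
  have hp : p.Prime := Fact.out
  have hp0 : (p : ℚ_[p]) ≠ 0 := Nat.cast_ne_zero.mpr hp.ne_zero
  constructor
  · rintro ⟨y, hy⟩
    by_contra hx
    rw [Padic.norm_le_one_iff_val_nonneg, not_le] at hx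
    have hx0 : x ≠ 0 := by
      intro h0; rw [h0] at hx; simp [Padic.valuation_zero] at hx
    -- valuation of p * x^l
    have hvt : ((p : ℚ_[p]) * x ^ l).valuation = 1 + l * x.valuation := by
      rw [Padic.valuation_mul hp0 (pow_ne_zero l hx0), Padic.valuation_p,
        padic_val_pow x hx0]
    have hl2 : 2 ≤ l := hl.two_le
    have hxv : x.valuation ≤ -1 := by omega
    have hvtneg : ((p : ℚ_[p]) * x ^ l).valuation < 0 := by
      rw [hvt]; nlinarith [hxv, hl2]
    have ht0 : (p : ℚ_[p]) * x ^ l ≠ 0 := mul_ne_zero hp0 (pow_ne_zero l hx0)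
    have hsum : ((p : ℚ_[p]) * x ^ l + 1).valuation = 1 + l * x.valuation := by
      rw [padic_val_add_eq _ _ ht0 one_ne_zero
        (by rw [Padic.valuation_one]; exact hvtneg), hvt]
    have hy0 : y ≠ 0 := by
      intro h0
      rw [h0] at hy
      have hl0 : l ≠ 0 := hl.ne_zero
      rw [zero_pow hl0] at hy
      have hpx : (p : ℚ_[p]) * x ^ l = -1 := by linear_combination hy
      have h6 := hvt
      rw [hpx, padic_val_neg 1 one_ne_zero, Padic.valuation_one] at h6
      have hl2' : (2 : ℤ) ≤ l := by exact_mod_cast hl2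
      nlinarith [mul_le_mul_of_nonneg_left hxv (by positivity : (0:ℤ) ≤ (l:ℤ))]
    have heq : (1 : ℚ_[p]) + (p : ℚ_[p]) * x ^ l = (p : ℚ_[p]) * x ^ l + 1 := by ring
    have : (l : ℤ) * y.valuation = 1 + l * x.valuation := by
      rw [← padic_val_pow y hy0 l, ← hy, heq, hsum]
    have hdvd : (l : ℤ) ∣ 1 := ⟨y.valuation - x.valuation, by linarith [this]⟩
    have := Int.le_of_dvd one_pos hdvd
    omega
  · intro hx
    set x' : ℤ_[p] := ⟨x, hx⟩ with hx'
    set c : ℤ_[p] := 1 + (p : ℤ_[p]) * x' ^ l with hc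
    set F : Polynomial ℤ_[p] := Polynomial.X ^ l - Polynomial.C c with hF
    have hev1 : F.eval 1 = -((p : ℤ_[p]) * x' ^ l) := by
      simp [hF, hc]
    have hder : F.derivative.eval 1 = (l : ℤ_[p]) := by
      simp [hF, Polynomial.derivative_X_pow]
    have hlnorm : ‖(l : ℤ_[p])‖ = 1 := by
      refine le_antisymm (PadicInt.norm_le_one _) ?_
      by_contra h
      push_neg at h
      have : ((l : ℤ) : ℤ_[p]) = (l : ℤ_[p]) := by push_cast; ring
      rw [← this, PadicInt.norm_int_lt_one_iff_dvd] at h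
      have := Int.natCast_dvd_natCast.mp h
      rcases (Nat.prime_dvd_prime_iff_eq hp hl).mp this with rfl
      exact hlp rfl
    have hnorm : ‖F.eval 1‖ < ‖F.derivative.eval 1‖ ^ 2 := by
      rw [hev1, hder, hlnorm, one_pow, norm_neg]
      calc ‖(p : ℤ_[p]) * x' ^ l‖ ≤ ‖(p : ℤ_[p])‖ * 1 := by
            rw [norm_mul]
            gcongr
            exact PadicInt.norm_le_one _
        _ = (p : ℝ)⁻¹ := by rw [mul_one, PadicInt.norm_p]
        _ < 1 := by
            rw [inv_lt_one_iff₀]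
            right
            exact_mod_cast hp.one_lt
    obtain ⟨z, hz, -⟩ := hensels_lemma hnorm
    have hz' : z ^ l = c := by
      have : z ^ l - c = 0 := by simpa [hF] using hz
      exact sub_eq_zero.mp this
    refine ⟨(z : ℚ_[p]), ?_⟩
    have := congrArg (fun t : ℤ_[p] => (t : ℚ_[p])) hz'
    push_cast at this
    rw [this]
    push_cast [hc]
    rfl
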